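/- Let r be a nonnegative real number, and let G be a τ-critical graph with τ(G) = t and |V(G)| = n. Let λ₁ denote the largest eigenvalue of the adjacency matrix of G. Then n·(r + λ₁/2) ≤ (2t + 2r + 1)²/8. -/

import Mathlib

open SimpleGraph

variable {V : Type*}

/-- A transversal set (vertex cover): a set of vertices incident to all edges. -/
def IsTransversal (G : SimpleGraph V) (T : Finset V) : Prop :=
  ∀ ⦃u v : V⦄, G.Adj u v → u ∈ T ∨ v ∈ T

/-- The transversal number `τ(G)`: minimum cardinality of a transversal set. -/
noncomputable def tauNum (G : SimpleGraph V) [Fintype V] : ℕ :=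
  sInf {k | ∃ T : Finset V, T.card = k ∧ IsTransversal G T}

/-- `G` is τ-critical: it has no isolated vertex and deleting any edge decreases `τ`. -/
def IsTauCritical (G : SimpleGraph V) [Fintype V] : Prop :=
  (∀ v : V, ∃ u, G.Adj v u) ∧
    ∀ e ∈ G.edgeSet, tauNum (G.deleteEdges {e}) < tauNum G

/-- `mK2 m` is the disjoint union of `m` copies of `K₂`. -/
def mK2 (m : ℕ) : SimpleGraph (Fin m × Fin 2) where
  Adj x y := x.1 = y.1 ∧ x.2 ≠ y.2
  symm := ⟨fun _ _ ⟨h1, h2⟩ => ⟨h1.symm, h2.symm⟩⟩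
  loopless := ⟨fun _ ⟨_, h⟩ => h rfl⟩

/-- The spectral radius `λ₁(G)`: the largest eigenvalue of the adjacency matrix of `G`. -/
noncomputable def specRad (G : SimpleGraph V) [Fintype V] [DecidableEq V]
    [DecidableRel G.Adj] : ℝ :=
  sSup (spectrum ℝ (G.adjMatrix ℝ))

/-- The signless Laplacian spectral radius `q₁(G)`: the largest eigenvalue of
`Q(G) = D(G) + A(G)`. -/
noncomputable def signlessLapSpecRad (G : SimpleGraph V) [Fintype V] [DecidableEq V]
    [DecidableRel G.Adj] : ℝ :=
  sSup (spectrum ℝ (Matrix.diagonal (fun v => (G.degree v : ℝ)) + G.adjMatrix ℝ))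


open Finset
set_option linter.unusedSectionVars false
section TC
variable [Fintype V] [DecidableEq V] (G : SimpleGraph V)

/-- independence of a finset -/
def IndepF (G : SimpleGraph V) (S : Finset V) : Prop := ∀ a ∈ S, ∀ b ∈ S, ¬ G.Adj a b

lemma tauNum_exists : ∃ T : Finset V, IsTransversal G T ∧ T.card = tauNum G := by
  have hne : {k | ∃ T : Finset V, T.card = k ∧ IsTransversal G T}.Nonempty :=
    ⟨(Finset.univ : Finset V).card, (Finset.univ : Finset V), rfl,
      fun u v _ => Or.inl (mem_univ u)⟩
  obtain ⟨T, hT1, hT2⟩ := Nat.sInf_mem hne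
  exact ⟨T, hT2, hT1⟩

lemma tauNum_le {T : Finset V} (h : IsTransversal G T) : tauNum G ≤ T.card :=
  Nat.sInf_le ⟨T, rfl, h⟩

lemma indepF_card {S : Finset V} (h : IndepF G S) :
    S.card + tauNum G ≤ Fintype.card V := by
  have htr : IsTransversal G (Finset.univ \ S) := by
    intro u v huv
    by_contra hcon
    push_neg at hcon
    obtain ⟨h1, h2⟩ := hcon
    simp only [mem_sdiff, mem_univ, true_and, not_not] at h1 h2
    exact h u h1 v h2 huv
  have h1 := tauNum_le G htr
  rw [Finset.card_univ_diff] at h1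
  have h2 : S.card ≤ Fintype.card V := S.card_le_univ
  omega

lemma crit_witness (hcrit : IsTauCritical G) {u v : V} (h : G.Adj u v) :
    ∃ I : Finset V, u ∈ I ∧ v ∈ I ∧ I.card + tauNum G = Fintype.card V + 1 ∧
      ∀ a ∈ I, ∀ b ∈ I, G.Adj a b → (a = u ∧ b = v) ∨ (a = v ∧ b = u) := by
  have he : s(u, v) ∈ G.edgeSet := G.mem_edgeSet.2 h
  have hlt := hcrit.2 _ he
  obtain ⟨T', hT't, hT'c⟩ := tauNum_exists (G.deleteEdges {s(u, v)})
  -- inserting u (or v) gives a transversal of G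
  have hins : ∀ w : V, (w = u ∨ w = v) → IsTransversal G (insert w T') := by
    intro w hw a b hab
    by_cases hp : s(a, b) = s(u, v)
    · rw [Sym2.eq_iff] at hp
      rcases hp with ⟨rfl, rfl⟩ | ⟨rfl, rfl⟩ <;>
        rcases hw with rfl | rfl <;> simp
    · have : (G.deleteEdges {s(u, v)}).Adj a b := by
        rw [SimpleGraph.deleteEdges_adj]
        exact ⟨hab, by simpa using hp⟩
      rcases hT't this with h1 | h1
      · exact Or.inl (mem_insert_of_mem h1)
      · exact Or.inr (mem_insert_of_mem h1)
  have hcardlt : T'.card < tauNum G := hT'c ▸ hlt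
  have hnu : u ∉ T' := by
    intro hu
    have := tauNum_le G (hins u (Or.inl rfl))
    rw [Finset.insert_eq_self.2 hu] at this
    omega
  have hnv : v ∉ T' := by
    intro hv
    have := tauNum_le G (hins v (Or.inr rfl))
    rw [Finset.insert_eq_self.2 hv] at this
    omega
  have hcard : T'.card + 1 = tauNum G := by
    have h1 := tauNum_le G (hins u (Or.inl rfl))
    have h2 := Finset.card_insert_le u T'
    omega
  refine ⟨Finset.univ \ T', by simp [hnu], by simp [hnv], ?_, ?_⟩
  · rw [Finset.card_univ_diff]
    have := T'.card_le_univ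
    omega
  · intro a ha b hb hab
    by_contra hcon
    have : (G.deleteEdges {s(u, v)}).Adj a b := by
      rw [SimpleGraph.deleteEdges_adj]
      refine ⟨hab, ?_⟩
      simp only [Set.mem_singleton_iff, Sym2.eq_iff]
      tauto
    rcases hT't this with h1 | h1
    · simp [mem_sdiff] at ha; exact ha h1
    · simp [mem_sdiff] at hb; exact hb h1

/-- complement of the closed neighborhood of `v` -/
def Bset (G : SimpleGraph V) [DecidableRel G.Adj] (v : V) : Finset V :=
  Finset.univ.filter (fun w => w ≠ v ∧ ¬ G.Adj v w)

/-- neighbors, within `Bset v`, of the set `A` -/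
def NBset (G : SimpleGraph V) [DecidableRel G.Adj] (v : V) (A : Finset V) : Finset V :=
  (Bset G v).filter (fun c => ∃ a ∈ A, G.Adj a c)

variable [DecidableRel G.Adj]

lemma mem_Bset {v w : V} : w ∈ Bset G v ↔ w ≠ v ∧ ¬ G.Adj v w := by
  simp [Bset]

lemma card_Bset (v : V) : (Bset G v).card + (G.degree v + 1) = Fintype.card V := by
  have he : Bset G v = Finset.univ \ insert v (G.neighborFinset v) := by
    ext w
    simp [Bset, mem_sdiff, not_or, and_comm]
  rw [he, Finset.card_univ_diff]
  have h1 : (insert v (G.neighborFinset v)).card = G.degree v + 1 := by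
    rw [Finset.card_insert_of_notMem (G.notMem_neighborFinset_self v)]
    rfl
  have h2 := (insert v (G.neighborFinset v)).card_le_univ
  omega

lemma NBset_subset {v : V} {A : Finset V} : NBset G v A ⊆ Bset G v := filter_subset _ _

lemma NBset_mono {v : V} {A A' : Finset V} (h : A ⊆ A') : NBset G v A ⊆ NBset G v A' := by
  intro c hc
  simp only [NBset, mem_filter] at hc ⊢
  exact ⟨hc.1, hc.2.imp fun a ha => ⟨h ha.1, ha.2⟩⟩

lemma not_mem_NBset_self {v : V} {A : Finset V} (hA : IndepF G A) {a : V} (ha : a ∈ A) :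
    a ∉ NBset G v A := by
  intro hc
  simp only [NBset, mem_filter] at hc
  obtain ⟨b, hb, hadj⟩ := hc.2
  exact hA b hb a ha hadj

lemma indepB_card {v : V} {S : Finset V} (hS : S ⊆ Bset G v) (h : IndepF G S) :
    S.card + (tauNum G + 1) ≤ Fintype.card V := by
  have hv : v ∉ S := fun hv => ((mem_Bset G).1 (hS hv)).1 rfl
  have hind : IndepF G (insert v S) := by
    intro a ha b hb hab
    rcases mem_insert.1 ha with ha' | haS
    · rcases mem_insert.1 hb with hb' | hbS
      · exact G.irrefl (ha' ▸ hb' ▸ hab)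
      · exact ((mem_Bset G).1 (hS hbS)).2 (ha' ▸ hab)
    · rcases mem_insert.1 hb with hb' | hbS
      · exact ((mem_Bset G).1 (hS haS)).2 (hb' ▸ hab).symm
      · exact h a haS b hbS hab
  have := indepF_card G hind
  rw [Finset.card_insert_of_notMem hv] at this
  omega

/-- from criticality of the edge `v y`: a maximum independent subset of `Bset v`
avoiding all neighbors of `y`. -/
lemma avoid_witness (hcrit : IsTauCritical G) {v y : V} (hvy : G.Adj v y) :
    ∃ D : Finset V, D ⊆ Bset G v ∧ IndepF G D ∧
      D.card + (tauNum G + 1) = Fintype.card V ∧ ∀ d ∈ D, ¬ G.Adj y d := by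
  obtain ⟨I, hvI, hyI, hIcard, hIprop⟩ := crit_witness G hcrit hvy
  have hne : v ≠ y := hvy.ne
  refine ⟨(I.erase v).erase y, ?_, ?_, ?_, ?_⟩
  · intro w hw
    have hwy : w ≠ y := ne_of_mem_erase hw
    have hwv : w ≠ v := ne_of_mem_erase (mem_of_mem_erase hw)
    have hwI : w ∈ I := mem_of_mem_erase (mem_of_mem_erase hw)
    rw [mem_Bset]
    refine ⟨hwv, fun hadj => ?_⟩
    rcases hIprop v hvI w hwI hadj with ⟨-, h2⟩ | ⟨h1, -⟩
    · exact hwy h2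
    · exact hne h1
  · intro a ha b hb hab
    have haI : a ∈ I := mem_of_mem_erase (mem_of_mem_erase ha)
    have hbI : b ∈ I := mem_of_mem_erase (mem_of_mem_erase hb)
    rcases hIprop a haI b hbI hab with ⟨h1, -⟩ | ⟨h1, -⟩
    · exact ne_of_mem_erase (mem_of_mem_erase ha) h1
    · exact ne_of_mem_erase ha h1
  · have h1 : y ∈ I.erase v := mem_erase.2 ⟨hne.symm, hyI⟩
    have c1 : ((I.erase v).erase y).card + 1 = (I.erase v).card :=
      Finset.card_erase_add_one h1
    have c2 : (I.erase v).card + 1 = I.card := Finset.card_erase_add_one hvI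
    omega
  · intro d hd hadj
    have hdI : d ∈ I := mem_of_mem_erase (mem_of_mem_erase hd)
    rcases hIprop y hyI d hdI hadj with ⟨h1, -⟩ | ⟨-, h2⟩
    · exact hne h1.symm
    · exact ne_of_mem_erase (mem_of_mem_erase hd) h2
instance decIndepF (A : Finset V) : Decidable (IndepF G A) := by
  unfold IndepF; infer_instance

/-- **Key lemma** (localized Hall property in τ-critical graphs):
any independent subset of the non-neighborhood of `v` has at least as many
neighbors inside that non-neighborhood. -/
lemma NB_card_ge (hcrit : IsTauCritical G) (v : V) :
    ∀ A ⊆ Bset G v, IndepF G A → A.card ≤ (NBset G v A).card := by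
  by_contra hcon
  push_neg at hcon
  obtain ⟨A₀, hA₀B, hA₀i, hA₀lt⟩ := hcon
  have hVne : ((Bset G v).powerset.filter
      (fun A => IndepF G A ∧ (NBset G v A).card < A.card)).Nonempty :=
    ⟨A₀, by simp only [mem_filter, mem_powerset]; exact ⟨hA₀B, hA₀i, hA₀lt⟩⟩
  obtain ⟨A, hAmem, hmin⟩ := Finset.exists_min_image _ Finset.card hVne
  simp only [mem_filter, mem_powerset] at hAmem
  obtain ⟨hAB, hAi, hAlt⟩ := hAmem
  have hproper : ∀ A' ⊆ Bset G v, IndepF G A' → A'.card < A.card →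
      A'.card ≤ (NBset G v A').card := by
    intro A' h1 h2 h3
    by_contra h4
    push_neg at h4
    have := hmin A' (by simp only [mem_filter, mem_powerset]; exact ⟨h1, h2, h4⟩)
    omega
  have hAne : A.Nonempty := card_pos.1 (by omega)
  set C := NBset G v A with hC
  have hAC : ∀ a ∈ A, a ∉ C := fun a ha => not_mem_NBset_self G hAi ha
  have hcardC : C.card + 1 = A.card := by
    obtain ⟨a₀, ha₀⟩ := hAne
    have he1 : (A.erase a₀).card + 1 = A.card := Finset.card_erase_add_one ha₀
    have h1 : (A.erase a₀).card ≤ (NBset G v (A.erase a₀)).card :=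
      hproper _ ((erase_subset _ _).trans hAB)
        (fun a ha b hb => hAi a (mem_of_mem_erase ha) b (mem_of_mem_erase hb)) (by omega)
    have h2 := Finset.card_le_card (NBset_mono G (v := v) (erase_subset a₀ A))
    have h3 : (NBset G v A).card = C.card := by rw [hC]
    omega
  -- Hall system of distinct representatives avoiding a prescribed `p`
  have hallF : ∀ p ∈ A, ∃ f : V → V, Set.InjOn f ↑(A.erase p) ∧
      (∀ a ∈ A.erase p, f a ∈ C ∧ G.Adj a (f a)) ∧ (A.erase p).image f = C := by
    intro p hp
    have hall := (Finset.all_card_le_biUnion_card_iff_exists_injective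
      (fun a : {x // x ∈ A.erase p} => C.filter (fun c => G.Adj ↑a c))).1 ?_
    · obtain ⟨f₀, hf₀inj, hf₀mem⟩ := hall
      refine ⟨fun x => if h : x ∈ A.erase p then (f₀ ⟨x, h⟩ : V) else x, ?_, ?_, ?_⟩
      · intro a ha b hb hfab
        have ha' := Finset.mem_coe.1 ha
        have hb' := Finset.mem_coe.1 hb
        simp only [dif_pos ha', dif_pos hb'] at hfab
        simpa using congrArg Subtype.val (hf₀inj hfab)
      · intro a ha
        simp only [dif_pos ha]
        have := hf₀mem ⟨a, ha⟩
        exact ⟨(mem_filter.1 this).1, (mem_filter.1 this).2⟩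
      · apply Finset.eq_of_subset_of_card_le
        · intro c hc
          obtain ⟨a, ha, rfl⟩ := mem_image.1 hc
          simp only [dif_pos ha]
          exact (mem_filter.1 (hf₀mem ⟨a, ha⟩)).1
        · have hinj : Set.InjOn (fun x => if h : x ∈ A.erase p then (f₀ ⟨x, h⟩ : V) else x)
              ↑(A.erase p) := by
            intro a ha b hb hfab
            have ha' := Finset.mem_coe.1 ha
            have hb' := Finset.mem_coe.1 hb
            simp only [dif_pos ha', dif_pos hb'] at hfab
            simpa using congrArg Subtype.val (hf₀inj hfab)
          rw [Finset.card_image_of_injOn hinj]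
          have := Finset.card_erase_add_one hp
          omega
    · -- Hall's condition, from minimality
      intro s
      classical
      set s' := s.image Subtype.val with hs'
      have hs'sub : s' ⊆ A.erase p := by
        intro a ha
        obtain ⟨b, _, rfl⟩ := mem_image.1 ha
        exact b.2
      have hcards : s.card = s'.card :=
        (Finset.card_image_of_injective s Subtype.val_injective).symm
      have hNBsub : NBset G v s' ⊆ s.biUnion
          (fun a : {x // x ∈ A.erase p} => C.filter (fun c => G.Adj ↑a c)) := by
        intro c hcmem
        obtain ⟨hcB, a', ha's, hadj⟩ := by
          simpa only [NBset, mem_filter] using hcmem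
        obtain ⟨a, has, rfl⟩ := mem_image.1 ha's
        have hcC : c ∈ C := by
          rw [hC]
          exact mem_filter.2 ⟨hcB, a, mem_of_mem_erase (hs'sub ha's), hadj⟩
        exact mem_biUnion.2 ⟨a, has, mem_filter.2 ⟨hcC, hadj⟩⟩
      have hlt' : s'.card < A.card := by
        have h1 := Finset.card_le_card hs'sub
        have h2 := Finset.card_erase_add_one hp
        omega
      have h3 : s'.card ≤ (NBset G v s').card :=
        hproper s' ((hs'sub.trans (erase_subset _ _)).trans hAB)
          (fun a ha b hb => hAi a (mem_of_mem_erase (hs'sub ha))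
            b (mem_of_mem_erase (hs'sub hb))) hlt'
      calc s.card = s'.card := hcards
        _ ≤ (NBset G v s').card := h3
        _ ≤ _ := Finset.card_le_card hNBsub
  by_cases hcase : ∃ y, G.Adj v y ∧ ∃ p ∈ A, G.Adj y p
  · -- Case 1 : some vertex in N(v) has a neighbor in A
    obtain ⟨y, hvy, p, hpA, hyp⟩ := hcase
    obtain ⟨D, hDB, hDi, hDcard, hDav⟩ := avoid_witness G hcrit hvy
    obtain ⟨f, hfinj, hfmem, hfimg⟩ := hallF p hpA
    set P := (A.erase p).filter (fun a => f a ∈ D) with hP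
    have hPsub : P ⊆ A.erase p := filter_subset _ _
    have himgP : P.image f = D ∩ C := by
      ext c
      constructor
      · intro hc
        obtain ⟨a, ha, rfl⟩ := mem_image.1 hc
        have h1 := mem_filter.1 ha
        exact mem_inter.2 ⟨h1.2, (hfmem a h1.1).1⟩
      · intro hc
        have hcC : c ∈ C := (mem_inter.1 hc).2
        obtain ⟨a, ha, rfl⟩ := mem_image.1 (hfimg ▸ hcC)
        exact mem_image.2 ⟨a, mem_filter.2 ⟨ha, (mem_inter.1 hc).1⟩, rfl⟩
    have hPcard : P.card = (D ∩ C).card := by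
      have h1 := Finset.card_image_of_injOn (hfinj.mono (Finset.coe_subset.2 hPsub))
      rw [himgP] at h1
      exact h1.symm
    have hdisj : Disjoint (D \ C) P := by
      rw [Finset.disjoint_left]
      intro a haD haP
      exact hDi a (mem_sdiff.1 haD).1 (f a) (mem_filter.1 haP).2
        (hfmem a (mem_filter.1 haP).1).2
    set D' := (D \ C) ∪ P with hD'
    have hD'card : D'.card = D.card := by
      rw [hD', Finset.card_union_of_disjoint hdisj, hPcard]
      have := Finset.card_inter_add_card_sdiff D C
      omega
    have hPsubA : P ⊆ A := hPsub.trans (erase_subset _ _)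
    have hcross : ∀ a ∈ A, ∀ d ∈ D \ C, ¬ G.Adj a d := by
      intro a ha d hd hadj
      exact (mem_sdiff.1 hd).2
        (mem_filter.2 ⟨hDB (mem_sdiff.1 hd).1, a, ha, hadj⟩)
    have hADi : IndepF G (A ∪ D') := by
      intro a ha b hb hadj
      have hmem : ∀ z ∈ A ∪ D', z ∈ A ∨ z ∈ D \ C := by
        intro z hz
        rcases mem_union.1 hz with hz | hz
        · exact Or.inl hz
        · rcases mem_union.1 hz with hz | hz
          · exact Or.inr hz
          · exact Or.inl (hPsubA hz)
      rcases hmem a ha with ha' | ha' <;> rcases hmem b hb with hb' | hb'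
      · exact hAi a ha' b hb' hadj
      · exact hcross a ha' b hb' hadj
      · exact hcross b hb' a ha' hadj.symm
      · exact hDi a (mem_sdiff.1 ha').1 b (mem_sdiff.1 hb').1 hadj
    have hADB : A ∪ D' ⊆ Bset G v := by
      apply union_subset hAB
      apply union_subset
      · exact (sdiff_subset).trans hDB
      · exact hPsubA.trans hAB
    have hcard1 := indepB_card G hADB hADi
    have hle : (A ∪ D').card ≤ D'.card := by omega
    have hEq : D' = A ∪ D' := Finset.eq_of_subset_of_card_le subset_union_right hle
    have hpD' : p ∈ D' := by rw [hEq]; exact mem_union.2 (Or.inl hpA)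
    rcases mem_union.1 hpD' with h | h
    · exact hDav p (mem_sdiff.1 h).1 hyp
    · exact Finset.notMem_erase p A (hPsub h)
  · -- Case 2 : no vertex of N(v) has a neighbor in A
    push_neg at hcase
    obtain ⟨w, hwA⟩ := hAne
    obtain ⟨x, hwx⟩ := hcrit.1 w
    have hwB := hAB hwA
    have hxB : x ∈ Bset G v := by
      rw [mem_Bset]
      constructor
      · rintro rfl
        exact ((mem_Bset G).1 hwB).2 hwx.symm
      · intro hvx
        exact hcase x hvx w hwA hwx.symm
    have hxC : x ∈ C := mem_filter.2 ⟨hxB, w, hwA, hwx⟩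
    obtain ⟨f, hfinj, hfmem, hfimg⟩ := hallF w hwA
    obtain ⟨I, hwI, hxI, hIcard, hIprop⟩ := crit_witness G hcrit hwx
    set P := (A.erase w).filter (fun a => f a ∈ I) with hP
    have hPsub : P ⊆ A.erase w := filter_subset _ _
    have hPsubA : P ⊆ A := hPsub.trans (erase_subset _ _)
    have himgP : P.image f = I ∩ C := by
      ext c
      constructor
      · intro hc
        obtain ⟨a, ha, rfl⟩ := mem_image.1 hc
        have h1 := mem_filter.1 ha
        exact mem_inter.2 ⟨h1.2, (hfmem a h1.1).1⟩
      · intro hc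
        have hcC : c ∈ C := (mem_inter.1 hc).2
        obtain ⟨a, ha, rfl⟩ := mem_image.1 (hfimg ▸ hcC)
        exact mem_image.2 ⟨a, mem_filter.2 ⟨ha, (mem_inter.1 hc).1⟩, rfl⟩
    have hPcard : P.card = (I ∩ C).card := by
      have h1 := Finset.card_image_of_injOn (hfinj.mono (Finset.coe_subset.2 hPsub))
      rw [himgP] at h1
      exact h1.symm
    have hPnI : ∀ a ∈ P, a ∉ I := by
      intro a haP haI
      have ha' := (mem_filter.1 haP).1
      have hfa : f a ∈ I := (mem_filter.1 haP).2
      have hadj : G.Adj a (f a) := (hfmem a ha').2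
      rcases hIprop a haI (f a) hfa hadj with ⟨h1, -⟩ | ⟨h1, -⟩
      · exact Finset.ne_of_mem_erase ha' h1
      · exact hAC a (mem_of_mem_erase ha') (h1 ▸ hxC)
    have hdisj : Disjoint (I \ C) P := by
      rw [Finset.disjoint_right]
      intro a haP haI
      exact hPnI a haP (mem_sdiff.1 haI).1
    set R := (I \ C) ∪ P with hR
    have hRcard : R.card = I.card := by
      rw [hR, Finset.card_union_of_disjoint hdisj, hPcard]
      have := Finset.card_inter_add_card_sdiff I C
      omega
    have hcross2 : ∀ a ∈ A, ∀ q ∈ I \ C, ¬ G.Adj a q := by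
      intro a ha q hq hadj
      have hqB : q ∈ Bset G v := by
        rw [mem_Bset]
        constructor
        · rintro rfl
          exact ((mem_Bset G).1 (hAB ha)).2 hadj.symm
        · intro hvq
          exact hcase q hvq a ha hadj.symm
      exact (mem_sdiff.1 hq).2 (mem_filter.2 ⟨hqB, a, ha, hadj⟩)
    have hRi : IndepF G R := by
      intro a ha b hb hadj
      rcases mem_union.1 ha with ha' | ha' <;> rcases mem_union.1 hb with hb' | hb'
      · rcases hIprop a (mem_sdiff.1 ha').1 b (mem_sdiff.1 hb').1 hadj with
          ⟨-, h2⟩ | ⟨h1, -⟩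
        · exact (mem_sdiff.1 hb').2 (h2 ▸ hxC)
        · exact (mem_sdiff.1 ha').2 (h1 ▸ hxC)
      · exact hcross2 b (hPsubA hb') a ha' hadj.symm
      · exact hcross2 a (hPsubA ha') b hb' hadj
      · exact hAi a (hPsubA ha') b (hPsubA hb') hadj
    have := indepF_card G hRi
    omega
/-- **Hajnal's degree bound** for τ-critical graphs: `n + d(v) ≤ 2τ + 1`. -/
lemma deg_bound (hcrit : IsTauCritical G) (v : V) :
    Fintype.card V + G.degree v ≤ 2 * tauNum G + 1 := by
  obtain ⟨y, hvy⟩ := hcrit.1 v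
  obtain ⟨D, hDB, hDi, hDcard, hDav⟩ := avoid_witness G hcrit hvy
  have h1 : D.card ≤ (NBset G v D).card := NB_card_ge G hcrit v D hDB hDi
  have hdisj : Disjoint D (NBset G v D) := by
    rw [Finset.disjoint_left]
    intro a haD haN
    exact not_mem_NBset_self G hDi haD haN
  have h2 : (D ∪ NBset G v D).card ≤ (Bset G v).card :=
    Finset.card_le_card (union_subset hDB (NBset_subset G))
  rw [Finset.card_union_of_disjoint hdisj] at h2
  have h3 := card_Bset G v
  omega
lemma row_sum_eq_degree (k : V) :
    ∑ j ∈ Finset.univ.erase k, ‖(G.adjMatrix ℝ) k j‖ = G.degree k := by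
  have h0 : ∀ j, ‖(G.adjMatrix ℝ) k j‖ = (G.adjMatrix ℝ) k j := by
    intro j
    rw [Real.norm_eq_abs, abs_of_nonneg]
    rw [SimpleGraph.adjMatrix_apply]
    split <;> norm_num
  simp only [h0]
  rw [Finset.sum_erase _ (by simp : (G.adjMatrix ℝ) k k = 0)]
  simp only [SimpleGraph.adjMatrix_apply]
  rw [Finset.sum_boole]
  rw [SimpleGraph.degree, neighborFinset_eq_filter]

lemma spec_le_deg {μ : ℝ} (hμ : μ ∈ spectrum ℝ (G.adjMatrix ℝ)) :
    ∃ k : V, μ ≤ G.degree k := by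
  have heq : Matrix.toLin' (G.adjMatrix ℝ) = Matrix.toLinAlgEquiv' (G.adjMatrix ℝ) := by
    ext v' j
    simp [Matrix.toLin'_apply, Matrix.toLinAlgEquiv'_apply]
  have h1 : μ ∈ spectrum ℝ (Matrix.toLin' (G.adjMatrix ℝ)) := by
    rw [heq, AlgEquiv.spectrum_eq Matrix.toLinAlgEquiv' (G.adjMatrix ℝ)]
    exact hμ
  have h2 : Module.End.HasEigenvalue (Matrix.toLin' (G.adjMatrix ℝ)) μ :=
    Module.End.hasEigenvalue_iff_mem_spectrum.2 h1
  obtain ⟨k, hk⟩ := eigenvalue_mem_ball h2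
  refine ⟨k, ?_⟩
  rw [Metric.mem_closedBall, row_sum_eq_degree G k] at hk
  have hd : dist μ ((G.adjMatrix ℝ) k k) = |μ| := by
    rw [show (G.adjMatrix ℝ) k k = 0 by simp, dist_zero_right, Real.norm_eq_abs]
  rw [hd] at hk
  exact (le_abs_self μ).trans hk
end TC


/-- For a nonnegative real `r` and a τ-critical graph `G` with
`τ(G) = t` and `|V(G)| = n`, we have `n·(r + λ₁/2) ≤ (2t + 2r + 1)²/8`. -/
theorem tau_critical_card_mul_real_r_add_half_specRad_le (G : SimpleGraph V) [Fintype V]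
    [DecidableEq V] [DecidableRel G.Adj] (t n : ℕ) (r : ℝ) (hr : 0 ≤ r)
    (hcrit : IsTauCritical G) (ht : tauNum G = t) (hn : Fintype.card V = n) :
    (n : ℝ) * (r + specRad G / 2) ≤ (2 * t + 2 * r + 1) ^ 2 / 8 := by
  subst ht hn
  rcases isEmpty_or_nonempty V with hV | hV
  · rw [Fintype.card_eq_zero, Nat.cast_zero, zero_mul]
    positivity
  · set t := tauNum G with htt
    set n := Fintype.card V with hnn
    set lam := specRad G with hlam
    have v : V := Classical.arbitrary V
    have hdegv := deg_bound G hcrit v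
    have hdpos : 0 < G.degree v := by
      obtain ⟨y, hy⟩ := hcrit.1 v
      exact (G.degree_pos_iff_exists_adj v).2 ⟨y, hy⟩
    have hn2t : n ≤ 2 * t := by omega
    have hn2t' : (n : ℝ) ≤ 2 * t := by exact_mod_cast hn2t
    have hbound : (0:ℝ) ≤ 2 * t + 1 - n := by linarith
    have hlam2 : lam ≤ 2 * t + 1 - n := by
      apply Real.sSup_le _ hbound
      intro μ hμ
      obtain ⟨k, hk⟩ := spec_le_deg G hμ
      have hdk := deg_bound G hcrit k
      have hdk' : (n:ℝ) + (G.degree k : ℝ) ≤ 2 * t + 1 := by exact_mod_cast hdk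
      linarith
    have hn0 : (0:ℝ) ≤ n := Nat.cast_nonneg n
    by_cases hsgn : 0 ≤ 2 * r + lam
    · have h1 : (n:ℝ) + (2*r + lam) ≤ 2*t + 2*r + 1 := by linarith
      have h2 : (0:ℝ) ≤ (n:ℝ) + (2*r + lam) := by linarith
      nlinarith [sq_nonneg ((n:ℝ) - (2*r + lam)),
        mul_le_mul h1 h1 h2 (le_trans h2 h1)]
    · have hle : (n:ℝ) * (r + lam/2) ≤ 0 :=
        mul_nonpos_of_nonneg_of_nonpos hn0 (by linarith)
      refine hle.trans ?_
      positivity
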